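/- Let a, b > 0 and D ≥ 0 be real numbers, and define Q1 = 1/3 − (1/(2π))·arccos((D+a)/(D+a+b)) − (1/(2π))·arccos((D+b)/(D+a+b)); Q2 = 1/3 − (1/(2π))·arccos( a/(√(2a)·√(D+a+b)) ) − (1/(2π))·arccos( b/(√(2b)·√(D+a+b)) ); Q3 = 1/3 − (1/(4π))·[ arccos(1/2) + arccos((D+b)/(D+a+b)) + 2·arccos( a/(√(2a)·√(D+a+b)) ) ]; Q4 = 1/3 − (1/(4π))·[ arccos(1/2) + arccos((D+a)/(D+a+b)) + 2·arccos( b/(√(2b)·√(D+a+b)) ) ]; Q5 = 0. Then Q1 ≥ max{Q2, Q3, Q4, Q5}, and Q1 = Q2 = Q3 = Q4 = Q5 holds if and only if D = 0 and a = b. -/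

import Mathlib

open Real

noncomputable section

/-- `Q₁ = 1/3 - (1/(2π)) arccos((D+a)/(D+a+b)) - (1/(2π)) arccos((D+b)/(D+a+b))`. -/
def Q1 (a b D : ℝ) : ℝ :=
  1 / 3 - (1 / (2 * π)) * Real.arccos ((D + a) / (D + a + b))
    - (1 / (2 * π)) * Real.arccos ((D + b) / (D + a + b))

/-- `Q₂ = 1/3 - (1/(2π)) arccos(a/(√(2a)√(D+a+b))) - (1/(2π)) arccos(b/(√(2b)√(D+a+b)))`. -/
def Q2 (a b D : ℝ) : ℝ :=
  1 / 3 - (1 / (2 * π)) * Real.arccos (a / (Real.sqrt (2 * a) * Real.sqrt (D + a + b)))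
    - (1 / (2 * π)) * Real.arccos (b / (Real.sqrt (2 * b) * Real.sqrt (D + a + b)))

/-- `Q₃`. -/
def Q3 (a b D : ℝ) : ℝ :=
  1 / 3 - (1 / (4 * π)) * (Real.arccos (1 / 2) + Real.arccos ((D + b) / (D + a + b))
    + 2 * Real.arccos (a / (Real.sqrt (2 * a) * Real.sqrt (D + a + b))))

/-- `Q₄`. -/
def Q4 (a b D : ℝ) : ℝ :=
  1 / 3 - (1 / (4 * π)) * (Real.arccos (1 / 2) + Real.arccos ((D + a) / (D + a + b))
    + 2 * Real.arccos (b / (Real.sqrt (2 * b) * Real.sqrt (D + a + b))))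

/-- `Q₅ = 0`. -/
def Q5 (a b D : ℝ) : ℝ := 0

lemma key_double (c S : ℝ) (hc : 0 < c) (hcS : c ≤ S) :
    2 * Real.arccos (c / (Real.sqrt (2 * c) * Real.sqrt S)) = π - Real.arccos ((S - c) / S) := by
  have hS : 0 < S := lt_of_lt_of_le hc hcS
  have hprod : Real.sqrt (2 * c) * Real.sqrt S = Real.sqrt (2 * c * S) :=
    (Real.sqrt_mul (by positivity) S).symm
  set x := c / (Real.sqrt (2 * c) * Real.sqrt S) with hx
  have hsq : Real.sqrt (2 * c * S) ^ 2 = 2 * c * S := Real.sq_sqrt (by positivity)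
  have hx0 : 0 ≤ x := by positivity
  have hx1 : x ≤ 1 := by
    rw [hx, hprod, div_le_one (by positivity)]
    have h1 : c = Real.sqrt (c ^ 2) := (Real.sqrt_sq hc.le).symm
    rw [h1]
    exact Real.sqrt_le_sqrt (by nlinarith)
  have hxsq : 2 * x ^ 2 - 1 = c / S - 1 := by
    rw [hx, hprod, div_pow, hsq]
    field_simp
  have hy0 : 0 ≤ (S - c) / S := div_nonneg (by linarith) hS.le
  have hy1 : (S - c) / S ≤ 1 := by
    rw [div_le_one hS]; linarith
  apply Real.injOn_cos
  · constructor
    · linarith [Real.arccos_nonneg x]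
    · have := Real.arccos_le_pi_div_two.2 hx0
      linarith
  · constructor
    · linarith [Real.arccos_le_pi ((S - c) / S)]
    · linarith [Real.arccos_nonneg ((S - c) / S)]
  · rw [Real.cos_two_mul, Real.cos_arccos (by linarith) hx1, Real.cos_pi_sub,
      Real.cos_arccos (by linarith) hy1, hxsq]
    field_simp
    ring

lemma arccos_half : Real.arccos (1 / 2 : ℝ) = π / 3 := by
  rw [← Real.cos_pi_div_three]
  exact Real.arccos_cos (by positivity) (by linarith [pi_pos])

lemma sum_bound (a b D : ℝ) (ha : 0 < a) (hb : 0 < b) (hD : 0 ≤ D) :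
    Real.arccos ((D + a) / (D + a + b)) + Real.arccos ((D + b) / (D + a + b)) ≤ 2 * π / 3 ∧
      (Real.arccos ((D + a) / (D + a + b)) + Real.arccos ((D + b) / (D + a + b)) = 2 * π / 3 →
        (D = 0 ∧ a = b)) := by
  have hS : 0 < D + a + b := by linarith
  set α := Real.arccos ((D + a) / (D + a + b)) with hαdef
  set β := Real.arccos ((D + b) / (D + a + b)) with hβdef
  have h1a : 0 ≤ (D + a) / (D + a + b) := by positivity
  have h2a : (D + a) / (D + a + b) ≤ 1 := by rw [div_le_one hS]; linarith
  have h1b : 0 ≤ (D + b) / (D + a + b) := by positivity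
  have h2b : (D + b) / (D + a + b) ≤ 1 := by rw [div_le_one hS]; linarith
  have hcosα : Real.cos α = (D + a) / (D + a + b) := Real.cos_arccos (by linarith) h2a
  have hcosβ : Real.cos β = (D + b) / (D + a + b) := Real.cos_arccos (by linarith) h2b
  have hα0 : 0 ≤ α := Real.arccos_nonneg _
  have hβ0 : 0 ≤ β := Real.arccos_nonneg _
  have hαt : α ≤ π / 2 := Real.arccos_le_pi_div_two.2 h1a
  have hβt : β ≤ π / 2 := Real.arccos_le_pi_div_two.2 h1b
  have hcc : 1 + D / (D + a + b) = 2 * Real.cos ((α + β) / 2) * Real.cos ((α - β) / 2) := by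
    rw [← Real.cos_add_cos, hcosα, hcosβ]
    field_simp
    ring
  have hDS : 0 ≤ D / (D + a + b) := by positivity
  have hcp : 0 ≤ Real.cos ((α + β) / 2) :=
    Real.cos_nonneg_of_mem_Icc ⟨by linarith [pi_pos], by linarith⟩
  have hcm : Real.cos ((α - β) / 2) ≤ 1 := Real.cos_le_one _
  have hhalf : 1 / 2 ≤ Real.cos ((α + β) / 2) := by nlinarith
  have hle : α + β ≤ 2 * π / 3 := by
    by_contra h
    push_neg at h
    have h3 : Real.cos ((α + β) / 2) < Real.cos (π / 3) := by
      apply Real.strictAntiOn_cos ⟨by positivity, by linarith [pi_pos]⟩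
        ⟨by positivity, by linarith⟩
      linarith
    rw [Real.cos_pi_div_three] at h3
    linarith
  refine ⟨hle, ?_⟩
  intro h
  have hc2 : Real.cos ((α + β) / 2) = 1 / 2 := by
    have h5 : (α + β) / 2 = π / 3 := by linarith
    rw [h5, Real.cos_pi_div_three]
  rw [hc2] at hcc
  have hD0 : D = 0 := by
    have h6 : D / (D + a + b) ≤ 0 := by nlinarith
    have h7 : D / (D + a + b) = 0 := le_antisymm h6 hDS
    rw [div_eq_zero_iff] at h7
    rcases h7 with h7 | h7
    · exact h7
    · linarith
  have hcm1 : Real.cos ((α - β) / 2) = 1 := by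
    rw [hD0] at hcc
    rw [show (0:ℝ) / (0 + a + b) = 0 by simp] at hcc
    linarith
  have hαβ : α = β := by
    have h2 := (Real.cos_eq_one_iff_of_lt_of_lt
      (by nlinarith [pi_pos] : -(2 * π) < (α - β) / 2)
      (by nlinarith [pi_pos] : (α - β) / 2 < 2 * π)).1 hcm1
    linarith
  refine ⟨hD0, ?_⟩
  have h8 : (D + a) / (D + a + b) = (D + b) / (D + a + b) := by
    rw [← hcosα, ← hcosβ, hαβ]
  rw [div_eq_div_iff hS.ne' hS.ne'] at h8
  have h9 := mul_right_cancel₀ (ne_of_gt hS) h8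
  linarith

/-- Lemma: ordering of the HDLSS kernel limits: for `a, b > 0` and `D ≥ 0`,
`Q₁ ≥ max {Q₂, Q₃, Q₄, Q₅}`, with equality `Q₁ = Q₂ = Q₃ = Q₄ = Q₅` iff `D = 0` and `a = b`. -/
theorem stmt19 (a b D : ℝ) (ha : 0 < a) (hb : 0 < b) (hD : 0 ≤ D) :
    max (Q2 a b D) (max (Q3 a b D) (max (Q4 a b D) (Q5 a b D))) ≤ Q1 a b D ∧
      ((Q1 a b D = Q2 a b D ∧ Q2 a b D = Q3 a b D ∧ Q3 a b D = Q4 a b D ∧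
          Q4 a b D = Q5 a b D) ↔ (D = 0 ∧ a = b)) := by
  have hπ := pi_pos
  have hS : 0 < D + a + b := by linarith
  have hka := key_double a (D + a + b) ha (by linarith)
  have hkb := key_double b (D + a + b) hb (by linarith)
  rw [show D + a + b - a = D + b by ring] at hka
  rw [show D + a + b - b = D + a by ring] at hkb
  obtain ⟨hle, hfwd⟩ := sum_bound a b D ha hb hD
  set α := Real.arccos ((D + a) / (D + a + b)) with hαdef
  set β := Real.arccos ((D + b) / (D + a + b)) with hβdef
  set A := Real.arccos (a / (Real.sqrt (2 * a) * Real.sqrt (D + a + b))) with hAdef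
  set B := Real.arccos (b / (Real.sqrt (2 * b) * Real.sqrt (D + a + b))) with hBdef
  have hA : A = (π - β) / 2 := by linarith
  have hB : B = (π - α) / 2 := by linarith
  have hQ1 : Q1 a b D = 1 / 3 - (α + β) / (2 * π) := by
    simp only [Q1, ← hαdef, ← hβdef]
    ring
  have hQ2 : Q2 a b D = (α + β) / (4 * π) - 1 / 6 := by
    simp only [Q2, ← hAdef, ← hBdef]
    rw [hA, hB]
    field_simp
    ring
  have hQ3 : Q3 a b D = 0 := by
    simp only [Q3, ← hβdef, ← hAdef]
    rw [arccos_half, hka]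
    field_simp
    ring
  have hQ4 : Q4 a b D = 0 := by
    simp only [Q4, ← hαdef, ← hBdef]
    rw [arccos_half, hkb]
    field_simp
    ring
  have hQ5 : Q5 a b D = 0 := rfl
  have hα0 : 0 ≤ α := Real.arccos_nonneg _
  have hβ0 : 0 ≤ β := Real.arccos_nonneg _
  have hQ1n : 0 ≤ Q1 a b D := by
    rw [hQ1]
    have h1 : (α + β) / (2 * π) ≤ 1 / 3 := by
      rw [div_le_iff₀ (by positivity)]
      linarith
    linarith
  have hQ2n : Q2 a b D ≤ 0 := by
    rw [hQ2]
    have h1 : (α + β) / (4 * π) ≤ 1 / 6 := by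
      rw [div_le_iff₀ (by positivity)]
      linarith
    linarith
  constructor
  · have h0 : max (Q3 a b D) (max (Q4 a b D) (Q5 a b D)) = 0 := by
      rw [hQ3, hQ4, hQ5]; simp
    rw [h0]
    exact max_le (hQ2n.trans hQ1n) hQ1n
  · constructor
    · rintro ⟨h12, h23, -, -⟩
      have hz : Q1 a b D = 0 := by rw [h12, h23, hQ3]
      rw [hQ1] at hz
      apply hfwd
      have h1 : (α + β) / (2 * π) = 1 / 3 := by linarith
      rw [div_eq_iff (by positivity : (2:ℝ) * π ≠ 0)] at h1
      linarith
    · rintro ⟨hD0, hab⟩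
      have e3 : (D + a) / (D + a + b) = 1 / 2 := by
        rw [hD0, ← hab, div_eq_iff (by linarith : (0:ℝ) + a + a ≠ 0)]
        ring
      have e4 : (D + b) / (D + a + b) = 1 / 2 := by
        rw [hD0, ← hab, div_eq_iff (by linarith : (0:ℝ) + a + a ≠ 0)]
        ring
      rw [e3, arccos_half] at hαdef
      rw [e4, arccos_half] at hβdef
      have hQ1z : Q1 a b D = 0 := by
        rw [hQ1, hαdef, hβdef]
        field_simp
        ring
      have hQ2z : Q2 a b D = 0 := by
        rw [hQ2, hαdef, hβdef]
        field_simp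
        ring
      exact ⟨by rw [hQ1z, hQ2z], by rw [hQ2z, hQ3], by rw [hQ3, hQ4], by rw [hQ4, hQ5]⟩
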